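/- Let M = (𝓔, 𝓕) be a rank-3 simple matroid, let (E₁, E₂, E₃) be a basis of M, and let E ∈ 𝓔 be any element. Then there exist indices i ≠ j in {1, 2, 3} such that E, E_i, E_j are pairwise distinct and form a basis of M. -/
import Mathlib


/-- A rank-3 simple matroid: a finite set of elements together with a collection of
flats (subsets of the element set) such that every pair of distinct elements is
contained in exactly one flat, and there are at least two distinct flats. -/
structure RankThreeMatroid (α : Type*) where
  elts : Finset α
  flats : Finset (Finset α)
  flats_subset : ∀ f ∈ flats, f ⊆ elts
  existsUnique_flat : ∀ e₁ ∈ elts, ∀ e₂ ∈ elts, e₁ ≠ e₂ →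
    ∃! f, f ∈ flats ∧ e₁ ∈ f ∧ e₂ ∈ f
  two_flats : ∃ f₁ ∈ flats, ∃ f₂ ∈ flats, f₁ ≠ f₂

/-- Three pairwise distinct elements `e₁, e₂, e₃` form a basis when the flats
`F₁₂`, `F₁₃`, `F₂₃` determined by the three pairs are pairwise distinct. -/
def RankThreeMatroid.IsBasis {α : Type*} (M : RankThreeMatroid α) (e₁ e₂ e₃ : α) : Prop :=
  e₁ ∈ M.elts ∧ e₂ ∈ M.elts ∧ e₃ ∈ M.elts ∧ e₁ ≠ e₂ ∧ e₁ ≠ e₃ ∧ e₂ ≠ e₃ ∧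
  ∃ f₁₂ f₁₃ f₂₃ : Finset α,
    (f₁₂ ∈ M.flats ∧ e₁ ∈ f₁₂ ∧ e₂ ∈ f₁₂) ∧
    (f₁₃ ∈ M.flats ∧ e₁ ∈ f₁₃ ∧ e₃ ∈ f₁₃) ∧
    (f₂₃ ∈ M.flats ∧ e₂ ∈ f₂₃ ∧ e₃ ∈ f₂₃) ∧
    f₁₂ ≠ f₁₃ ∧ f₁₂ ≠ f₂₃ ∧ f₁₃ ≠ f₂₃


/-- If `e` avoids the flat through `x` and `y`, then `e, x, y` form a basis. -/
lemma RankThreeMatroid.isBasis_of_not_mem {α : Type*} (M : RankThreeMatroid α)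
    (e x y : α) (he : e ∈ M.elts) (hx : x ∈ M.elts) (hy : y ∈ M.elts)
    (hex : e ≠ x) (hey : e ≠ y) (hxy : x ≠ y)
    (f : Finset α) (hf : f ∈ M.flats) (hxf : x ∈ f) (hyf : y ∈ f) (hef : e ∉ f) :
    M.IsBasis e x y := by
  obtain ⟨gx, ⟨hgx, hegx, hxgx⟩, hgxu⟩ := M.existsUnique_flat e he x hx hex
  obtain ⟨gy, ⟨hgy, hegy, hygy⟩, hgyu⟩ := M.existsUnique_flat e he y hy hey
  refine ⟨he, hx, hy, hex, hey, hxy, gx, gy, f, ⟨hgx, hegx, hxgx⟩, ⟨hgy, hegy, hygy⟩,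
    ⟨hf, hxf, hyf⟩, ?_, ?_, ?_⟩
  · intro h
    obtain ⟨u, _, huu⟩ := M.existsUnique_flat x hx y hy hxy
    have h1 : f = u := huu f ⟨hf, hxf, hyf⟩
    have h2 : gx = u := huu gx ⟨hgx, hxgx, h ▸ hygy⟩
    exact hef ((h1.trans h2.symm) ▸ hegx)
  · intro h; exact hef (h ▸ hegx)
  · intro h; exact hef (h ▸ hegy)

/-- Given a basis `b 0, b 1, b 2` of a rank-3 simple matroid and any element `e`,
there are two indices `i ≠ j` such that `e, b i, b j` are pairwise distinct and
form a basis. (Pairwise distinctness is part of `IsBasis`.) -/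
theorem element_forms_basis_with_two_of_basis {α : Type*} (M : RankThreeMatroid α)
    (b : Fin 3 → α) (hb : M.IsBasis (b 0) (b 1) (b 2)) (e : α) (he : e ∈ M.elts) :
    ∃ i j : Fin 3, i ≠ j ∧ M.IsBasis e (b i) (b j) := by
  obtain ⟨h0, h1, h2, h01, h02, h12, f01, f02, f12, ⟨hf01, h0f01, h1f01⟩,
    ⟨hf02, h0f02, h2f02⟩, ⟨hf12, h1f12, h2f12⟩, hA, hB, hC⟩ := hb
  by_cases he0 : e = b 0
  · subst he0
    exact ⟨1, 2, by decide, h0, h1, h2, h01, h02, h12, f01, f02, f12,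
      ⟨hf01, h0f01, h1f01⟩, ⟨hf02, h0f02, h2f02⟩, ⟨hf12, h1f12, h2f12⟩, hA, hB, hC⟩
  by_cases he1 : e = b 1
  · subst he1
    exact ⟨0, 2, by decide, h1, h0, h2, fun h => h01 h.symm, h12, h02, f01, f12, f02,
      ⟨hf01, h1f01, h0f01⟩, ⟨hf12, h1f12, h2f12⟩, ⟨hf02, h0f02, h2f02⟩,
      hB, hA, fun h => hC h.symm⟩
  by_cases he2 : e = b 2
  · subst he2
    exact ⟨0, 1, by decide, h2, h0, h1, fun h => h02 h.symm, fun h => h12 h.symm, h01,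
      f02, f12, f01, ⟨hf02, h2f02, h0f02⟩, ⟨hf12, h2f12, h1f12⟩, ⟨hf01, h0f01, h1f01⟩,
      hC, fun h => hA h.symm, fun h => hB h.symm⟩
  by_cases hef : e ∈ f01
  · -- then e ∉ f02
    have hef02 : e ∉ f02 := by
      intro h
      obtain ⟨u, _, huu⟩ := M.existsUnique_flat e he (b 0) h0 he0
      exact hA ((huu f01 ⟨hf01, hef, h0f01⟩).trans (huu f02 ⟨hf02, h, h0f02⟩).symm)
    exact ⟨0, 2, by decide,
      M.isBasis_of_not_mem e (b 0) (b 2) he h0 h2 he0 he2 h02 f02 hf02 h0f02 h2f02 hef02⟩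
  · exact ⟨0, 1, by decide,
      M.isBasis_of_not_mem e (b 0) (b 1) he h0 h1 he0 he1 h01 f01 hf01 h0f01 h1f01 hef⟩
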